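/- Let N ≥ 2 and let n_1, …, n_N be positive integers, V_u > 0 and V_u^b > 0 real numbers, g ∈ ℝ^{n_N}. Let A₁ be an n_N×n_1 real matrix and, for l = 2, …, N, let B_l be an n_{l−1}×n_l real matrix. For each l = 1, …, N let (e^l[t])_{t≥1} be a bounded sequence in ℝ^{n_l}. Define sequences β^l[t] ∈ ℝ^{n_l} by β^l[0] = 0 for all l, and for t ≥ 0: β^N[t+1] = φ((1/V_u^b)·((t/(t+1))·(1/V_u)·A₁·β^1[t] + g)) − (1/V_u^b)·e^N[t+1]/(t+1), and β^l[t+1] = φ((1/V_u^b)·(1/V_u)·B_{l+1}·β^{l+1}[t+1]) − (1/V_u^b)·e^l[t+1]/(t+1) for l = N−1, …, 1. If there exists γ < 1 such that ‖A₁‖₂·‖B_N‖₂·⋯·‖B₂‖₂ ≤ γ·V_u^N·(V_u^b)^N, then for each l the sequence β^l[t] converges to a limit β^{l*} ∈ ℝ^{n_l}; moreover β^{N*} = φ((1/V_u^b)·((1/V_u)·A₁·β^{1*} + g)) and β^{l*} = φ((1/V_u^b)·(1/V_u)·B_{l+1}·β^{(l+1)*}) for l = N−1, …, 1. -/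

import Mathlib

open Filter Topology

/-- Euclidean norm of a vector in `ℝ^n`. -/
noncomputable def l2norm {n : ℕ} (x : Fin n → ℝ) : ℝ := Real.sqrt (∑ i, (x i) ^ 2)

/-- Operator norm of a matrix with respect to Euclidean norms, `‖A‖₂`. -/
noncomputable def l2OpNorm {m n : ℕ} (A : Matrix (Fin m) (Fin n) ℝ) : ℝ :=
  sInf {c : ℝ | 0 ≤ c ∧ ∀ x : Fin n → ℝ, l2norm (A.mulVec x) ≤ c * l2norm x}

/-- Coordinatewise clamp `φ(x)_i = min(1, max(−1, x_i))`. -/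
noncomputable def clamp1 {n : ℕ} (x : Fin n → ℝ) : Fin n → ℝ := fun i => min 1 (max (-1) (x i))


/-- view a vector as an element of Euclidean space -/
noncomputable def toE {m : ℕ} (x : Fin m → ℝ) : EuclideanSpace ℝ (Fin m) := (WithLp.equiv 2 _).symm x

lemma l2norm_eq {m : ℕ} (x : Fin m → ℝ) : l2norm x = ‖toE x‖ := by
  rw [show ‖toE x‖ = Real.sqrt (∑ i, ‖toE x i‖^2) from EuclideanSpace.norm_eq (toE x)]
  simp [l2norm, toE, Real.norm_eq_abs, sq_abs]

lemma l2norm_nonneg {m : ℕ} (x : Fin m → ℝ) : 0 ≤ l2norm x := Real.sqrt_nonneg _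

lemma l2norm_smul {m : ℕ} (r : ℝ) (x : Fin m → ℝ) : l2norm (r • x) = |r| * l2norm x := by
  rw [l2norm_eq, l2norm_eq]
  exact norm_smul r (toE x)

lemma l2norm_add_le {m : ℕ} (x y : Fin m → ℝ) : l2norm (x + y) ≤ l2norm x + l2norm y := by
  rw [l2norm_eq, l2norm_eq, l2norm_eq]
  exact norm_add_le (toE x) (toE y)

lemma l2norm_sub_le {m : ℕ} (x y : Fin m → ℝ) : l2norm (x - y) ≤ l2norm x + l2norm y := by
  rw [l2norm_eq, l2norm_eq, l2norm_eq]
  exact norm_sub_le (toE x) (toE y)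

lemma abs_le_l2norm {m : ℕ} (x : Fin m → ℝ) (i : Fin m) : |x i| ≤ l2norm x := by
  unfold l2norm
  rw [show |x i| = Real.sqrt ((x i)^2) from (Real.sqrt_sq_eq_abs _).symm]
  apply Real.sqrt_le_sqrt
  exact Finset.single_le_sum (f := fun j => (x j)^2) (fun j _ => sq_nonneg _) (Finset.mem_univ i)

lemma clamp1_lip {m : ℕ} (x y : Fin m → ℝ) :
    l2norm (clamp1 x - clamp1 y) ≤ l2norm (x - y) := by
  unfold l2norm
  apply Real.sqrt_le_sqrt
  apply Finset.sum_le_sum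
  intro i _
  have h1 : |clamp1 x i - clamp1 y i| ≤ |x i - y i| := by
    unfold clamp1
    refine le_trans (abs_min_sub_min_le_max _ _ _ _) ?_
    simp only [sub_self, abs_zero]
    rw [max_eq_right (abs_nonneg _)]
    refine le_trans (abs_max_sub_max_le_max _ _ _ _) ?_
    simp only [sub_self, abs_zero]
    rw [max_eq_right (abs_nonneg _)]
  calc ((clamp1 x - clamp1 y) i) ^ 2 = |clamp1 x i - clamp1 y i| ^ 2 := by
        rw [sq_abs]; rfl
    _ ≤ |x i - y i| ^ 2 := pow_le_pow_left₀ (abs_nonneg _) h1 2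
    _ = ((x - y) i) ^ 2 := by rw [sq_abs]; rfl

lemma clamp1_bound {m : ℕ} (x : Fin m → ℝ) : l2norm (clamp1 x) ≤ Real.sqrt m := by
  unfold l2norm
  apply Real.sqrt_le_sqrt
  calc ∑ i, (clamp1 x i) ^ 2 ≤ ∑ _i : Fin m, 1 := by
        apply Finset.sum_le_sum
        intro i _
        rw [← sq_abs]
        have h1 : |clamp1 x i| ≤ 1 := by
          unfold clamp1
          rw [abs_le]
          exact ⟨le_min (by norm_num) (le_max_left _ _), min_le_left _ _⟩
        calc |clamp1 x i| ^ 2 ≤ 1 ^ 2 := pow_le_pow_left₀ (abs_nonneg _) h1 2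
          _ = 1 := one_pow 2
    _ = (m : ℝ) := by simp

lemma l2OpNorm_nonneg {m k : ℕ} (A : Matrix (Fin m) (Fin k) ℝ) : 0 ≤ l2OpNorm A :=
  Real.sInf_nonneg (fun _ hc => hc.1)

lemma l2norm_mulVec_le {m k : ℕ} (A : Matrix (Fin m) (Fin k) ℝ) (x : Fin k → ℝ) :
    l2norm (A.mulVec x) ≤ l2OpNorm A * l2norm x := by
  set S := {c : ℝ | 0 ≤ c ∧ ∀ x : Fin k → ℝ, l2norm (A.mulVec x) ≤ c * l2norm x} with hS
  have hTlin : ∃ c : ℝ, c ∈ S := by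
    let T : EuclideanSpace ℝ (Fin k) →ₗ[ℝ] EuclideanSpace ℝ (Fin m) :=
      { toFun := fun v => toE (A.mulVec v)
        map_add' := fun u v => by
          show toE (A.mulVec (u + v)) = toE (A.mulVec u) + toE (A.mulVec v)
          rw [Matrix.mulVec_add]; rfl
        map_smul' := fun r v => by
          show toE (A.mulVec (r • v)) = r • toE (A.mulVec v)
          rw [Matrix.mulVec_smul]; rfl }
    let Tc := LinearMap.toContinuousLinearMap T
    refine ⟨max ‖Tc‖ 0, le_max_right _ _, fun y => ?_⟩
    have h1 : l2norm (A.mulVec y) = ‖Tc (toE y)‖ := l2norm_eq _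
    rw [h1, l2norm_eq]
    calc ‖Tc (toE y)‖ ≤ ‖Tc‖ * ‖toE y‖ := Tc.le_opNorm _
      _ ≤ max ‖Tc‖ 0 * ‖toE y‖ :=
        mul_le_mul_of_nonneg_right (le_max_left _ _) (norm_nonneg _)
  obtain ⟨c₀, hc₀⟩ := hTlin
  rcases eq_or_lt_of_le (l2norm_nonneg x) with hx0 | hx0
  · have h0 : l2norm (A.mulVec x) ≤ 0 := by
      have := hc₀.2 x
      rw [← hx0, mul_zero] at this
      exact this
    calc l2norm (A.mulVec x) ≤ 0 := h0
      _ = l2OpNorm A * l2norm x := by rw [← hx0, mul_zero]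
  · have hlb : l2norm (A.mulVec x) / l2norm x ≤ l2OpNorm A := by
      apply le_csInf ⟨c₀, hc₀⟩
      intro c hc
      rw [div_le_iff₀ hx0]
      exact hc.2 x
    calc l2norm (A.mulVec x) = l2norm (A.mulVec x) / l2norm x * l2norm x := by
          field_simp
      _ ≤ l2OpNorm A * l2norm x := mul_le_mul_of_nonneg_right hlb (le_of_lt hx0)

lemma l2norm_mulVec_sub_le {m k : ℕ} (A : Matrix (Fin m) (Fin k) ℝ) (x y : Fin k → ℝ) :
    l2norm (A.mulVec x - A.mulVec y) ≤ l2OpNorm A * l2norm (x - y) := by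
  rw [← Matrix.mulVec_sub]
  exact l2norm_mulVec_le A (x - y)

lemma tendsto_of_l2 {m : ℕ} (x : ℕ → Fin m → ℝ) (a : Fin m → ℝ)
    (h : Tendsto (fun t => l2norm (x t - a)) atTop (𝓝 0)) : Tendsto x atTop (𝓝 a) := by
  rw [tendsto_pi_nhds]
  intro i
  rw [tendsto_iff_dist_tendsto_zero]
  exact squeeze_zero (fun t => dist_nonneg)
    (fun t => by rw [Real.dist_eq]; exact abs_le_l2norm (x t - a) i) h

lemma tendsto_zero_of_rec (κ : ℝ) (hκ0 : 0 ≤ κ) (hκ1 : κ < 1) (d ε : ℕ → ℝ)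
    (hd0 : ∀ t, 0 ≤ d t) (hε : Tendsto ε atTop (𝓝 0))
    (hrec : ∀ t, d (t + 1) ≤ κ * d t + ε t) : Tendsto d atTop (𝓝 0) := by
  rw [Metric.tendsto_atTop]
  intro δ hδ
  have h1κ : 0 < 1 - κ := by linarith
  obtain ⟨T, hT⟩ : ∃ T, ∀ t ≥ T, ε t ≤ (1 - κ) * δ / 4 := by
    obtain ⟨T, hT⟩ := Metric.tendsto_atTop.mp hε ((1 - κ) * δ / 4) (by positivity)
    refine ⟨T, fun t ht => ?_⟩
    have := hT t ht
    rw [Real.dist_eq, sub_zero] at this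
    exact le_trans (le_abs_self _) this.le
  have hstep : ∀ s : ℕ, d (T + s) ≤ κ ^ s * d T + δ / 2 := by
    intro s
    induction s with
    | zero => simp; linarith [hd0 T]
    | succ s ih =>
      have h1 : d (T + s + 1) ≤ κ * d (T + s) + ε (T + s) := hrec (T + s)
      have h2 : ε (T + s) ≤ (1 - κ) * δ / 4 := hT (T + s) (Nat.le_add_right _ _)
      have h3 : κ * d (T + s) ≤ κ * (κ ^ s * d T + δ / 2) :=
        mul_le_mul_of_nonneg_left ih hκ0
      have h4 : (T + (s + 1)) = (T + s) + 1 := by omega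
      rw [h4]
      have : κ * (κ ^ s * d T + δ / 2) + (1 - κ) * δ / 4 ≤ κ ^ (s + 1) * d T + δ / 2 := by
        rw [pow_succ]
        nlinarith
      linarith
  obtain ⟨S, hS⟩ : ∃ S, ∀ s ≥ S, κ ^ s * d T < δ / 2 := by
    have h5 : Tendsto (fun s : ℕ => κ ^ s * d T) atTop (𝓝 0) := by
      have := (tendsto_pow_atTop_nhds_zero_of_lt_one hκ0 hκ1).mul_const (d T)
      simpa using this
    obtain ⟨S, hS⟩ := Metric.tendsto_atTop.mp h5 (δ / 2) (by positivity)
    refine ⟨S, fun s hs => ?_⟩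
    have := hS s hs
    rw [Real.dist_eq, sub_zero] at this
    exact lt_of_le_of_lt (le_abs_self _) this
  refine ⟨T + S, fun t ht => ?_⟩
  rw [Real.dist_eq, sub_zero, abs_of_nonneg (hd0 t)]
  have h6 : t = T + (t - T) := by omega
  have h7 : t - T ≥ S := by omega
  calc d t = d (T + (t - T)) := by rw [← h6]
    _ ≤ κ ^ (t - T) * d T + δ / 2 := hstep _
    _ < δ / 2 + δ / 2 := by linarith [hS (t - T) h7]
    _ = δ := by ring

section ChainDefs

variable (N : ℕ) (n : ℕ → ℕ) (Vu Vub : ℝ)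
variable (B : (l : ℕ) → Matrix (Fin (n (l - 1))) (Fin (n l)) ℝ)

/-- one backward layer map -/
noncomputable def Gm (l : ℕ) (y : Fin (n (l + 1)) → ℝ) : Fin (n l) → ℝ :=
  clamp1 ((1 / Vub) • ((1 / Vu) • (B (l + 1)).mulVec y))

/-- the chain of layer maps from layer `N` down to layer `l` -/
noncomputable def chainMap : (l : ℕ) → (Fin (n N) → ℝ) → (Fin (n l) → ℝ)
  | l =>
    if h : l = N then fun y => cast (congrArg (fun m => (Fin (n m) → ℝ)) h).symm y
    else if h2 : l < N then fun y => Gm n Vu Vub B l (chainMap (l + 1) y)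
    else 0
  termination_by l => N - l
  decreasing_by omega

/-- the accumulated Lipschitz constant of `chainMap` -/
noncomputable def ccMap : (l : ℕ) → ℝ
  | l =>
    if l < N then (l2OpNorm (B (l + 1)) / (Vu * Vub)) * ccMap (l + 1)
    else 1
  termination_by l => N - l
  decreasing_by omega

lemma chainMap_N (y : Fin (n N) → ℝ) : chainMap N n Vu Vub B N y = y := by
  rw [chainMap]
  rw [dif_pos rfl]
  exact eq_of_heq (cast_heq _ _)

lemma chainMap_lt {l : ℕ} (h : l < N) (y : Fin (n N) → ℝ) :
    chainMap N n Vu Vub B l y = Gm n Vu Vub B l (chainMap N n Vu Vub B (l + 1) y) := by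
  rw [chainMap]
  rw [dif_neg (by omega), dif_pos h]

lemma ccMap_lt {l : ℕ} (h : l < N) :
    ccMap N n Vu Vub B l = (l2OpNorm (B (l + 1)) / (Vu * Vub)) * ccMap N n Vu Vub B (l + 1) := by
  rw [ccMap]
  rw [if_pos h]

lemma ccMap_N : ccMap N n Vu Vub B N = 1 := by
  rw [ccMap]
  rw [if_neg (by omega)]

variable {Vu Vub}

lemma ccMap_nonneg (hVu : 0 < Vu) (hVub : 0 < Vub) : ∀ k l, N - l = k → 0 ≤ ccMap N n Vu Vub B l := by
  intro k
  induction k with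
  | zero =>
    intro l hl
    rw [ccMap, if_neg (by omega)]
    norm_num
  | succ k ih =>
    intro l hl
    by_cases h : l < N
    · rw [ccMap_lt N n Vu Vub B h]
      have h1 : 0 ≤ ccMap N n Vu Vub B (l + 1) := ih (l + 1) (by omega)
      have h2 : 0 ≤ l2OpNorm (B (l + 1)) / (Vu * Vub) :=
        div_nonneg (l2OpNorm_nonneg _) (by positivity)
      positivity
    · rw [ccMap, if_neg h]; norm_num

lemma Gm_lip (hVu : 0 < Vu) (hVub : 0 < Vub) (l : ℕ) (u v : Fin (n (l + 1)) → ℝ) :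
    l2norm (Gm n Vu Vub B l u - Gm n Vu Vub B l v) ≤
      (l2OpNorm (B (l + 1)) / (Vu * Vub)) * l2norm (u - v) := by
  unfold Gm
  refine le_trans (clamp1_lip _ _) ?_
  have h1 : (1 / Vub) • ((1 / Vu) • (B (l + 1)).mulVec u) -
      (1 / Vub) • ((1 / Vu) • (B (l + 1)).mulVec v) =
      (1 / Vub) • ((1 / Vu) • ((B (l + 1)).mulVec u - (B (l + 1)).mulVec v)) := by
    rw [← smul_sub, ← smul_sub]
  rw [h1, l2norm_smul, l2norm_smul]
  have h2 := l2norm_mulVec_sub_le (B (l + 1)) u v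
  have h3 : |1 / Vub| = 1 / Vub := abs_of_pos (by positivity)
  have h4 : |1 / Vu| = 1 / Vu := abs_of_pos (by positivity)
  rw [h3, h4]
  calc 1 / Vub * (1 / Vu * l2norm ((B (l + 1)).mulVec u - (B (l + 1)).mulVec v))
      ≤ 1 / Vub * (1 / Vu * (l2OpNorm (B (l + 1)) * l2norm (u - v))) := by
        apply mul_le_mul_of_nonneg_left _ (by positivity)
        exact mul_le_mul_of_nonneg_left h2 (by positivity)
    _ = (l2OpNorm (B (l + 1)) / (Vu * Vub)) * l2norm (u - v) := by
        rw [div_eq_mul_inv (l2OpNorm (B (l + 1))), mul_inv]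
        ring

lemma ccMap_mul_pow (hVu : 0 < Vu) (hVub : 0 < Vub) :
    ∀ k l, N - l = k → l ≤ N →
      ccMap N n Vu Vub B l * (Vu * Vub) ^ (N - l) =
        ∏ j ∈ Finset.Icc (l + 1) N, l2OpNorm (B j) := by
  intro k
  induction k with
  | zero =>
    intro l hl hlN
    have hlN' : l = N := by omega
    subst hlN'
    rw [ccMap_N, Finset.Icc_eq_empty (by omega)]
    simp
  | succ k ih =>
    intro l hl hlN
    have h : l < N := by omega
    rw [ccMap_lt N n Vu Vub B h]
    have h1 : N - l = (N - (l + 1)) + 1 := by omega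
    rw [h1, pow_succ]
    have h2 := ih (l + 1) (by omega) (by omega)
    have h3 : ∏ j ∈ Finset.Icc (l + 1) N, l2OpNorm (B j) =
        l2OpNorm (B (l + 1)) * ∏ j ∈ Finset.Icc (l + 2) N, l2OpNorm (B j) := by
      rw [← Finset.Ico_add_one_right_eq_Icc, ← Finset.Ico_add_one_right_eq_Icc]
      exact Finset.prod_eq_prod_Ico_succ_bot (by omega) _
    rw [h3, ← h2]
    have hVV : (Vu * Vub) ≠ 0 := by positivity
    field_simp

end ChainDefs

lemma l2norm_zero {m : ℕ} : l2norm (0 : Fin m → ℝ) = 0 := by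
  simp [l2norm]

lemma chainMap_lip (N : ℕ) (n : ℕ → ℕ) {Vu Vub : ℝ}
    (B : (l : ℕ) → Matrix (Fin (n (l - 1))) (Fin (n l)) ℝ)
    (hVu : 0 < Vu) (hVub : 0 < Vub) :
    ∀ k l, N - l = k → ∀ u v : Fin (n N) → ℝ,
      l2norm (chainMap N n Vu Vub B l u - chainMap N n Vu Vub B l v) ≤
        ccMap N n Vu Vub B l * l2norm (u - v) := by
  intro k
  induction k with
  | zero =>
    intro l hl u v
    by_cases h : l = N
    · subst h
      rw [chainMap_N, chainMap_N, ccMap_N, one_mul]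
    · have hlN : N < l := by omega
      rw [chainMap, dif_neg h, dif_neg (by omega), ccMap, if_neg (by omega), one_mul]
      simp only [Pi.zero_apply, sub_zero, sub_self]
      rw [l2norm_zero]
      exact l2norm_nonneg _
  | succ k ih =>
    intro l hl u v
    have h : l < N := by omega
    rw [chainMap_lt N n Vu Vub B h, chainMap_lt N n Vu Vub B h, ccMap_lt N n Vu Vub B h]
    calc l2norm (Gm n Vu Vub B l (chainMap N n Vu Vub B (l + 1) u) -
          Gm n Vu Vub B l (chainMap N n Vu Vub B (l + 1) v))
        ≤ (l2OpNorm (B (l + 1)) / (Vu * Vub)) *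
            l2norm (chainMap N n Vu Vub B (l + 1) u - chainMap N n Vu Vub B (l + 1) v) :=
          Gm_lip n B hVu hVub l _ _
      _ ≤ (l2OpNorm (B (l + 1)) / (Vu * Vub)) *
            (ccMap N n Vu Vub B (l + 1) * l2norm (u - v)) := by
          apply mul_le_mul_of_nonneg_left (ih (l + 1) (by omega) u v)
          exact div_nonneg (l2OpNorm_nonneg _) (by positivity)
      _ = l2OpNorm (B (l + 1)) / (Vu * Vub) * ccMap N n Vu Vub B (l + 1) * l2norm (u - v) := by
          ring

/-- the top (layer `N`) limit map -/
noncomputable def Hm (n1 nN : ℕ) (Vu Vub : ℝ) (A1 : Matrix (Fin nN) (Fin n1) ℝ)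
    (g : Fin nN → ℝ) (x : Fin n1 → ℝ) : Fin nN → ℝ :=
  clamp1 ((1 / Vub) • ((1 / Vu) • A1.mulVec x + g))

lemma Hm_lip {n1 nN : ℕ} {Vu Vub : ℝ} (A1 : Matrix (Fin nN) (Fin n1) ℝ)
    (g : Fin nN → ℝ) (hVu : 0 < Vu) (hVub : 0 < Vub) (x y : Fin n1 → ℝ) :
    l2norm (Hm n1 nN Vu Vub A1 g x - Hm n1 nN Vu Vub A1 g y) ≤
      (l2OpNorm A1 / (Vu * Vub)) * l2norm (x - y) := by
  unfold Hm
  refine le_trans (clamp1_lip _ _) ?_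
  have h1 : (1 / Vub) • ((1 / Vu) • A1.mulVec x + g) - (1 / Vub) • ((1 / Vu) • A1.mulVec y + g)
      = (1 / Vub) • ((1 / Vu) • (A1.mulVec x - A1.mulVec y)) := by
    rw [← smul_sub]
    congr 1
    rw [smul_sub]
    abel
  rw [h1, l2norm_smul, l2norm_smul,
    abs_of_pos (show (0:ℝ) < 1 / Vub by positivity),
    abs_of_pos (show (0:ℝ) < 1 / Vu by positivity)]
  calc 1 / Vub * (1 / Vu * l2norm (A1.mulVec x - A1.mulVec y))
      ≤ 1 / Vub * (1 / Vu * (l2OpNorm A1 * l2norm (x - y))) := by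
        apply mul_le_mul_of_nonneg_left _ (by positivity)
        exact mul_le_mul_of_nonneg_left (l2norm_mulVec_sub_le A1 x y) (by positivity)
    _ = (l2OpNorm A1 / (Vu * Vub)) * l2norm (x - y) := by
        rw [div_eq_mul_inv (l2OpNorm A1), mul_inv]
        ring

lemma exists_fixed_of_l2_contraction {m : ℕ} (f : (Fin m → ℝ) → (Fin m → ℝ)) (κ : ℝ)
    (hκ0 : 0 ≤ κ) (hκ1 : κ < 1)
    (hf : ∀ x y, l2norm (f x - f y) ≤ κ * l2norm (x - y)) : ∃ y, f y = y := by
  let Φ : EuclideanSpace ℝ (Fin m) → EuclideanSpace ℝ (Fin m) :=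
    fun x => toE (f (WithLp.ofLp x))
  have hΦ : ContractingWith κ.toNNReal Φ := by
    constructor
    · exact_mod_cast Real.toNNReal_lt_one.mpr hκ1
    · apply LipschitzWith.of_dist_le_mul
      intro x y
      rw [dist_eq_norm, Real.coe_toNNReal κ hκ0, dist_eq_norm]
      have h1 : ‖x - y‖ = l2norm (x - y) := (l2norm_eq _).symm
      have h2 : ‖Φ x - Φ y‖ = l2norm (Φ x - Φ y) := (l2norm_eq _).symm
      rw [h1, h2]
      exact hf x y
  have hfix0 := hΦ.fixedPoint_isFixedPt
  obtain ⟨y0, hfix⟩ : ∃ y0 : EuclideanSpace ℝ (Fin m), Φ y0 = y0 :=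
    ⟨ContractingWith.fixedPoint Φ hΦ, hfix0⟩
  exact ⟨y0.ofLp, congrArg WithLp.ofLp hfix⟩

theorem stmt2 (N : ℕ) (hN : 2 ≤ N) (n : ℕ → ℕ) (hn : ∀ l, 1 ≤ l → l ≤ N → 0 < n l)
    (Vu Vub : ℝ) (hVu : 0 < Vu) (hVub : 0 < Vub)
    (A1 : Matrix (Fin (n N)) (Fin (n 1)) ℝ)
    (B : (l : ℕ) → Matrix (Fin (n (l - 1))) (Fin (n l)) ℝ)
    (g : Fin (n N) → ℝ)
    (e : (l : ℕ) → ℕ → Fin (n l) → ℝ)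
    (he : ∀ l, 1 ≤ l → l ≤ N → ∃ C : ℝ, ∀ t : ℕ, 1 ≤ t → l2norm (e l t) ≤ C)
    (β : (l : ℕ) → ℕ → Fin (n l) → ℝ)
    (hβ0 : ∀ l, β l 0 = 0)
    (hβN : ∀ t : ℕ, β N (t + 1) =
      clamp1 ((1 / Vub) • (((t : ℝ) / ((t : ℝ) + 1)) • ((1 / Vu) • A1.mulVec (β 1 t)) + g))
        - (1 / Vub) • ((1 / ((t : ℝ) + 1)) • e N (t + 1)))
    (hβl : ∀ l, 1 ≤ l → l ≤ N - 1 → ∀ t : ℕ, β l (t + 1) =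
      (clamp1 ((1 / Vub) • ((1 / Vu) • (B (l + 1)).mulVec (β (l + 1) (t + 1)))) :
          Fin (n l) → ℝ)
        - (1 / Vub) • ((1 / ((t : ℝ) + 1)) • e l (t + 1)))
    (hA : ∃ γ : ℝ, γ < 1 ∧
      l2OpNorm A1 * ∏ l ∈ Finset.Icc 2 N, l2OpNorm (B l) ≤ γ * Vu ^ N * Vub ^ N) :
    ∃ βstar : (l : ℕ) → Fin (n l) → ℝ,
      (∀ l, 1 ≤ l → l ≤ N → Tendsto (β l) atTop (𝓝 (βstar l))) ∧
      βstar N = clamp1 ((1 / Vub) • ((1 / Vu) • A1.mulVec (βstar 1) + g)) ∧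
      ∀ l, 1 ≤ l → l ≤ N - 1 →
        βstar l = (clamp1 ((1 / Vub) • ((1 / Vu) • (B (l + 1)).mulVec (βstar (l + 1)))) :
          Fin (n l) → ℝ) := by
  obtain ⟨γ, hγ1, hγA⟩ := hA
  have hN1 : 1 ≤ N := by omega
  have hVV : (0:ℝ) < Vu * Vub := by positivity
  -- the contraction constant
  set κ : ℝ := ccMap N n Vu Vub B 1 * (l2OpNorm A1 / (Vu * Vub)) with hκdef
  have hκ0 : 0 ≤ κ := by
    have h1 := ccMap_nonneg N n B hVu hVub (N - 1) 1 rfl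
    have h2 : 0 ≤ l2OpNorm A1 / (Vu * Vub) := div_nonneg (l2OpNorm_nonneg _) hVV.le
    positivity
  have hκγ : κ ≤ γ := by
    have hcc := ccMap_mul_pow N n B hVu hVub (N - 1) 1 rfl hN1
    have hpow : (Vu * Vub) ^ N = (Vu * Vub) * (Vu * Vub) ^ (N - 1) := by
      rw [← pow_succ']
      congr 1
      omega
    have hmain : κ * (Vu * Vub) ^ N = l2OpNorm A1 * ∏ j ∈ Finset.Icc 2 N, l2OpNorm (B j) := by
      rw [hκdef, hpow, ← hcc]
      field_simp
    have hγside : γ * Vu ^ N * Vub ^ N = γ * (Vu * Vub) ^ N := by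
      rw [mul_pow]; ring
    have hle : κ * (Vu * Vub) ^ N ≤ γ * (Vu * Vub) ^ N := by
      rw [hmain, ← hγside]; exact hγA
    exact le_of_mul_le_mul_right hle (by positivity)
  have hκ1 : κ < 1 := lt_of_le_of_lt hκγ hγ1
  -- existence of a fixed point of the limit map, via Euclidean space
  have hΦex : ∃ y : Fin (n 1) → ℝ,
      chainMap N n Vu Vub B 1 (Hm (n 1) (n N) Vu Vub A1 g y) = y := by
    apply exists_fixed_of_l2_contraction _ κ hκ0 hκ1
    intro x y
    calc l2norm (chainMap N n Vu Vub B 1 (Hm (n 1) (n N) Vu Vub A1 g x)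
          - chainMap N n Vu Vub B 1 (Hm (n 1) (n N) Vu Vub A1 g y))
        ≤ ccMap N n Vu Vub B 1 *
            l2norm (Hm (n 1) (n N) Vu Vub A1 g x - Hm (n 1) (n N) Vu Vub A1 g y) :=
          chainMap_lip N n B hVu hVub (N - 1) 1 rfl _ _
      _ ≤ ccMap N n Vu Vub B 1 * ((l2OpNorm A1 / (Vu * Vub)) * l2norm (x - y)) := by
          apply mul_le_mul_of_nonneg_left (Hm_lip A1 g hVu hVub x y)
          exact ccMap_nonneg N n B hVu hVub (N - 1) 1 rfl
      _ = κ * l2norm (x - y) := by rw [hκdef]; ring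
  obtain ⟨x1, hx1⟩ := hΦex
  -- the candidate limits
  set βstar : (l : ℕ) → Fin (n l) → ℝ :=
    fun l => chainMap N n Vu Vub B l (Hm (n 1) (n N) Vu Vub A1 g x1) with hβstardef
  have hβstar1 : βstar 1 = x1 := hx1
  -- boundedness of layer 1
  obtain ⟨C1, hC1⟩ := he 1 le_rfl hN1
  set Kb : ℝ := Real.sqrt (n 1) + (1 / Vub) * max C1 0 with hKbdef
  have hKb0 : 0 ≤ Kb := by positivity
  have hβ1b : ∀ t, l2norm (β 1 t) ≤ Kb := by
    intro t
    match t with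
    | 0 =>
      rw [hβ0 1, l2norm_zero]
      exact hKb0
    | (s + 1) =>
      rw [hβl 1 le_rfl (by omega) s]
      refine le_trans (l2norm_sub_le _ _) ?_
      have hclamp := clamp1_bound ((1 / Vub) • ((1 / Vu) • (B 2).mulVec (β 2 (s + 1))))
      have herr : l2norm ((1 / Vub) • ((1 / ((s:ℝ) + 1)) • e 1 (s + 1))) ≤ (1 / Vub) * max C1 0 := by
        rw [l2norm_smul, l2norm_smul,
          abs_of_pos (show (0:ℝ) < 1 / Vub by positivity),
          abs_of_pos (show (0:ℝ) < 1 / ((s:ℝ) + 1) by positivity)]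
        have h3 : l2norm (e 1 (s + 1)) ≤ max C1 0 :=
          le_trans (hC1 (s + 1) (by omega)) (le_max_left _ _)
        have h4 : (1:ℝ) / ((s:ℝ) + 1) ≤ 1 := by
          rw [div_le_one (by positivity)]
          have : (0:ℝ) ≤ (s:ℝ) := Nat.cast_nonneg s
          linarith
        calc 1 / Vub * (1 / ((s:ℝ) + 1) * l2norm (e 1 (s + 1)))
            ≤ 1 / Vub * (1 * max C1 0) := by
              apply mul_le_mul_of_nonneg_left _ (by positivity)
              exact mul_le_mul h4 h3 (l2norm_nonneg _) zero_le_one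
          _ = (1 / Vub) * max C1 0 := by ring
      rw [hKbdef]
      exact add_le_add hclamp herr
  -- the key per-layer estimate
  have key : ∀ k l, N - l = k → 1 ≤ l → l ≤ N → ∃ E : ℝ, ∀ t : ℕ,
      l2norm (β l (t + 1) - βstar l) ≤
        (ccMap N n Vu Vub B l * (l2OpNorm A1 / (Vu * Vub))) * l2norm (β 1 t - x1)
          + E * (1 / ((t:ℝ) + 1)) := by
    intro k
    induction k with
    | zero =>
      intro l hl hl1 hlN
      have hlN' : N = l := by omega
      subst hlN'
      obtain ⟨CN, hCN⟩ := he N hN1 le_rfl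
      refine ⟨(1 / Vub) * ((1 / Vu) * (l2OpNorm A1 * Kb)) + (1 / Vub) * max CN 0, fun t => ?_⟩
      have hβsN : βstar N = Hm (n 1) (n N) Vu Vub A1 g x1 := by
        rw [hβstardef]
        exact chainMap_N N n Vu Vub B _
      rw [hβN t, hβsN]
      set s : ℝ := 1 / ((t:ℝ) + 1) with hsdef
      have hs0 : 0 < s := by rw [hsdef]; positivity
      set w : Fin (n N) → ℝ := A1.mulVec (β 1 t) with hwdef
      set z : Fin (n N) → ℝ := A1.mulVec x1 with hzdef
      have hrearr : clamp1 ((1 / Vub) • (((t:ℝ) / ((t:ℝ) + 1)) • ((1 / Vu) • w) + g))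
            - (1 / Vub) • (s • e N (t + 1)) - Hm (n 1) (n N) Vu Vub A1 g x1
          = (clamp1 ((1 / Vub) • (((t:ℝ) / ((t:ℝ) + 1)) • ((1 / Vu) • w) + g))
              - Hm (n 1) (n N) Vu Vub A1 g x1) - (1 / Vub) • (s • e N (t + 1)) := by
        abel
      rw [hrearr]
      refine le_trans (l2norm_sub_le _ _) ?_
      have herr : l2norm ((1 / Vub) • (s • e N (t + 1))) ≤ ((1 / Vub) * max CN 0) * s := by
        rw [l2norm_smul, l2norm_smul,
          abs_of_pos (show (0:ℝ) < 1 / Vub by positivity), abs_of_pos hs0]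
        have h3 : l2norm (e N (t + 1)) ≤ max CN 0 :=
          le_trans (hCN (t + 1) (by omega)) (le_max_left _ _)
        calc 1 / Vub * (s * l2norm (e N (t + 1)))
            ≤ 1 / Vub * (s * max CN 0) := by
              apply mul_le_mul_of_nonneg_left _ (by positivity)
              exact mul_le_mul_of_nonneg_left h3 hs0.le
          _ = ((1 / Vub) * max CN 0) * s := by ring
      have hmain : l2norm (clamp1 ((1 / Vub) • (((t:ℝ) / ((t:ℝ) + 1)) • ((1 / Vu) • w) + g))
            - Hm (n 1) (n N) Vu Vub A1 g x1)
          ≤ (l2OpNorm A1 / (Vu * Vub)) * l2norm (β 1 t - x1)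
            + ((1 / Vub) * ((1 / Vu) * (l2OpNorm A1 * Kb))) * s := by
        unfold Hm
        refine le_trans (clamp1_lip _ _) ?_
        have hab : (1 / Vub) • (((t:ℝ) / ((t:ℝ) + 1)) • ((1 / Vu) • w) + g)
              - (1 / Vub) • ((1 / Vu) • z + g)
            = (1 / Vub) • (((1 / Vu) • (w - z)) - s • ((1 / Vu) • w)) := by
          rw [← smul_sub]
          congr 1
          have hts : (t:ℝ) / ((t:ℝ) + 1) = 1 - s := by
            rw [hsdef]
            field_simp
            ring
          rw [hts, sub_smul, one_smul, smul_sub]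
          abel
        rw [hab, l2norm_smul, abs_of_pos (show (0:ℝ) < 1 / Vub by positivity)]
        have h5 : l2norm ((1 / Vu) • (w - z) - s • ((1 / Vu) • w))
            ≤ (1 / Vu) * (l2OpNorm A1 * l2norm (β 1 t - x1)) + s * ((1 / Vu) * (l2OpNorm A1 * Kb)) := by
          refine le_trans (l2norm_sub_le _ _) ?_
          have h6 : l2norm ((1 / Vu) • (w - z)) ≤ (1 / Vu) * (l2OpNorm A1 * l2norm (β 1 t - x1)) := by
            rw [l2norm_smul, abs_of_pos (show (0:ℝ) < 1 / Vu by positivity)]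
            apply mul_le_mul_of_nonneg_left _ (by positivity)
            rw [hwdef, hzdef]
            exact l2norm_mulVec_sub_le A1 _ _
          have h7 : l2norm (s • ((1 / Vu) • w)) ≤ s * ((1 / Vu) * (l2OpNorm A1 * Kb)) := by
            rw [l2norm_smul, l2norm_smul, abs_of_pos hs0,
              abs_of_pos (show (0:ℝ) < 1 / Vu by positivity)]
            apply mul_le_mul_of_nonneg_left _ hs0.le
            apply mul_le_mul_of_nonneg_left _ (by positivity)
            rw [hwdef]
            calc l2norm (A1.mulVec (β 1 t)) ≤ l2OpNorm A1 * l2norm (β 1 t) :=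
                  l2norm_mulVec_le A1 _
              _ ≤ l2OpNorm A1 * Kb :=
                  mul_le_mul_of_nonneg_left (hβ1b t) (l2OpNorm_nonneg _)
          exact add_le_add h6 h7
        calc 1 / Vub * l2norm ((1 / Vu) • (w - z) - s • ((1 / Vu) • w))
            ≤ 1 / Vub * ((1 / Vu) * (l2OpNorm A1 * l2norm (β 1 t - x1))
                + s * ((1 / Vu) * (l2OpNorm A1 * Kb))) :=
              mul_le_mul_of_nonneg_left h5 (by positivity)
          _ = (l2OpNorm A1 / (Vu * Vub)) * l2norm (β 1 t - x1)
                + ((1 / Vub) * ((1 / Vu) * (l2OpNorm A1 * Kb))) * s := by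
              rw [div_eq_mul_inv (l2OpNorm A1), mul_inv]
              ring
      have hccN : ccMap N n Vu Vub B N = 1 := ccMap_N N n Vu Vub B
      rw [hccN, one_mul]
      calc l2norm (clamp1 ((1 / Vub) • (((t:ℝ) / ((t:ℝ) + 1)) • ((1 / Vu) • w) + g))
            - Hm (n 1) (n N) Vu Vub A1 g x1) + l2norm ((1 / Vub) • (s • e N (t + 1)))
          ≤ ((l2OpNorm A1 / (Vu * Vub)) * l2norm (β 1 t - x1)
              + ((1 / Vub) * ((1 / Vu) * (l2OpNorm A1 * Kb))) * s)
            + ((1 / Vub) * max CN 0) * s := add_le_add hmain herr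
        _ = (l2OpNorm A1 / (Vu * Vub)) * l2norm (β 1 t - x1)
              + ((1 / Vub) * ((1 / Vu) * (l2OpNorm A1 * Kb)) + (1 / Vub) * max CN 0) * s := by
            ring
    | succ k ih =>
      intro l hl hl1 hlN
      have h : l < N := by omega
      obtain ⟨E', hE'⟩ := ih (l + 1) (by omega) (by omega) (by omega)
      obtain ⟨Cl, hCl⟩ := he l hl1 (le_of_lt h)
      refine ⟨(l2OpNorm (B (l + 1)) / (Vu * Vub)) * E' + (1 / Vub) * max Cl 0, fun t => ?_⟩
      set s : ℝ := 1 / ((t:ℝ) + 1) with hsdef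
      have hs0 : 0 < s := by rw [hsdef]; positivity
      have hβsl : βstar l = Gm n Vu Vub B l (βstar (l + 1)) := by
        rw [hβstardef]
        exact chainMap_lt N n Vu Vub B h _
      have hstep : β l (t + 1) = Gm n Vu Vub B l (β (l + 1) (t + 1))
          - (1 / Vub) • (s • e l (t + 1)) := hβl l hl1 (by omega) t
      rw [hstep, hβsl]
      have hrearr : Gm n Vu Vub B l (β (l + 1) (t + 1)) - (1 / Vub) • (s • e l (t + 1))
            - Gm n Vu Vub B l (βstar (l + 1))
          = (Gm n Vu Vub B l (β (l + 1) (t + 1)) - Gm n Vu Vub B l (βstar (l + 1)))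
            - (1 / Vub) • (s • e l (t + 1)) := by abel
      rw [hrearr]
      refine le_trans (l2norm_sub_le _ _) ?_
      have herr : l2norm ((1 / Vub) • (s • e l (t + 1))) ≤ ((1 / Vub) * max Cl 0) * s := by
        rw [l2norm_smul, l2norm_smul,
          abs_of_pos (show (0:ℝ) < 1 / Vub by positivity), abs_of_pos hs0]
        have h3 : l2norm (e l (t + 1)) ≤ max Cl 0 :=
          le_trans (hCl (t + 1) (by omega)) (le_max_left _ _)
        calc 1 / Vub * (s * l2norm (e l (t + 1)))
            ≤ 1 / Vub * (s * max Cl 0) := by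
              apply mul_le_mul_of_nonneg_left _ (by positivity)
              exact mul_le_mul_of_nonneg_left h3 hs0.le
          _ = ((1 / Vub) * max Cl 0) * s := by ring
      have hBnn : 0 ≤ l2OpNorm (B (l + 1)) / (Vu * Vub) :=
        div_nonneg (l2OpNorm_nonneg _) hVV.le
      have hmain : l2norm (Gm n Vu Vub B l (β (l + 1) (t + 1)) - Gm n Vu Vub B l (βstar (l + 1)))
          ≤ (l2OpNorm (B (l + 1)) / (Vu * Vub)) *
              ((ccMap N n Vu Vub B (l + 1) * (l2OpNorm A1 / (Vu * Vub))) * l2norm (β 1 t - x1)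
                + E' * s) := by
        refine le_trans (Gm_lip n B hVu hVub l _ _) ?_
        exact mul_le_mul_of_nonneg_left (hE' t) hBnn
      have hcc : ccMap N n Vu Vub B l =
          (l2OpNorm (B (l + 1)) / (Vu * Vub)) * ccMap N n Vu Vub B (l + 1) :=
        ccMap_lt N n Vu Vub B h
      calc l2norm (Gm n Vu Vub B l (β (l + 1) (t + 1)) - Gm n Vu Vub B l (βstar (l + 1)))
            + l2norm ((1 / Vub) • (s • e l (t + 1)))
          ≤ (l2OpNorm (B (l + 1)) / (Vu * Vub)) *
              ((ccMap N n Vu Vub B (l + 1) * (l2OpNorm A1 / (Vu * Vub))) * l2norm (β 1 t - x1)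
                + E' * s)
            + ((1 / Vub) * max Cl 0) * s := add_le_add hmain herr
        _ = (ccMap N n Vu Vub B l * (l2OpNorm A1 / (Vu * Vub))) * l2norm (β 1 t - x1)
              + ((l2OpNorm (B (l + 1)) / (Vu * Vub)) * E' + (1 / Vub) * max Cl 0) * s := by
            rw [hcc]
            ring
  -- convergence of layer 1
  obtain ⟨E1, hE1⟩ := key (N - 1) 1 rfl le_rfl hN1
  have hεlim : ∀ E : ℝ, Tendsto (fun t : ℕ => E * (1 / ((t:ℝ) + 1))) atTop (𝓝 0) := by
    intro E
    have := tendsto_one_div_add_atTop_nhds_zero_nat.const_mul E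
    simpa using this
  have hd : Tendsto (fun t => l2norm (β 1 t - x1)) atTop (𝓝 0) := by
    apply tendsto_zero_of_rec κ hκ0 hκ1 _ (fun t : ℕ => E1 * (1 / ((t:ℝ) + 1)))
      (fun t => l2norm_nonneg _) (hεlim E1)
    intro t
    have := hE1 t
    rw [hβstar1] at this
    calc l2norm (β 1 (t + 1) - x1)
        ≤ (ccMap N n Vu Vub B 1 * (l2OpNorm A1 / (Vu * Vub))) * l2norm (β 1 t - x1)
          + E1 * (1 / ((t:ℝ) + 1)) := this
      _ = κ * l2norm (β 1 t - x1) + E1 * (1 / ((t:ℝ) + 1)) := by rw [hκdef]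
  -- convergence of every layer
  have hconv : ∀ l, 1 ≤ l → l ≤ N → Tendsto (β l) atTop (𝓝 (βstar l)) := by
    intro l hl1 hlN
    obtain ⟨El, hEl⟩ := key (N - l) l rfl hl1 hlN
    apply tendsto_of_l2
    have hshift : Tendsto (fun t => l2norm (β l (t + 1) - βstar l)) atTop (𝓝 0) := by
      apply squeeze_zero (fun t => l2norm_nonneg _) (fun t => hEl t)
      have h1 := hd.const_mul (ccMap N n Vu Vub B l * (l2OpNorm A1 / (Vu * Vub)))
      have h2 := (h1.add (hεlim El))
      simpa using h2
    exact (tendsto_add_atTop_iff_nat 1).mp hshift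
  refine ⟨βstar, hconv, ?_, ?_⟩
  · have h1 : βstar N = Hm (n 1) (n N) Vu Vub A1 g x1 := chainMap_N N n Vu Vub B _
    rw [h1, ← hβstar1]
    rfl
  · intro l hl1 hlN1
    have h : l < N := by omega
    have h1 : βstar l = Gm n Vu Vub B l (βstar (l + 1)) := chainMap_lt N n Vu Vub B h _
    rw [h1]
    rfl
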